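/- Let B be a Young function with Young conjugate B̃, and let p ∈ (1,∞) with conjugate exponent p' = p/(p−1). Then lim_{t→∞} B̃(t)/t^{p'} = ∞ if and only if lim_{t→∞} t^p / B(t) = ∞. -/

import Mathlib

open MeasureTheory Filter Set ENNReal

noncomputable section

/-- A Young function: a convex, non-decreasing, left-continuous function
`A : [0,∞] → [0,∞]` with `A(0) = 0`, `A(0+) = 0` and `A(∞) = ∞`. -/
structure YoungFunction where
  toFun : ℝ≥0∞ → ℝ≥0∞
  map_zero : toFun 0 = 0
  tendsto_zero : Filter.Tendsto toFun (nhdsWithin 0 (Set.Ioi 0)) (nhds 0)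
  mono : Monotone toFun
  convex' : ∀ s t c : ℝ≥0∞, c ≤ 1 →
    toFun (c * s + (1 - c) * t) ≤ c * toFun s + (1 - c) * toFun t
  left_continuous : ∀ t : ℝ≥0∞, 0 < t → toFun t = ⨆ s ∈ Set.Iio t, toFun s
  map_top : toFun ⊤ = ⊤

/-- Left-continuous inverse of a non-decreasing function `F : [0,∞] → [0,∞]`:
`F⁻¹(t) = inf {τ ≥ 0 : F(τ) ≥ t}`. -/
def leftInvE (F : ℝ≥0∞ → ℝ≥0∞) (t : ℝ≥0∞) : ℝ≥0∞ :=
  sInf {τ : ℝ≥0∞ | t ≤ F τ}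

/-- `a` is the right-continuous derivative of the Young function `A`:
`a` is non-decreasing, right-continuous, `a(∞) = ∞`, and
`A(t) = ∫₀ᵗ a(s) ds` for all finite `t ≥ 0`. -/
def IsYoungDerivative (A : YoungFunction) (a : ℝ≥0∞ → ℝ≥0∞) : Prop :=
  Monotone a ∧ a ⊤ = ⊤ ∧
    (∀ t : ℝ≥0∞, t ≠ ⊤ → Filter.Tendsto a (nhdsWithin t (Set.Ioi t)) (nhds (a t))) ∧
    ∀ t : ℝ, 0 ≤ t →
      A.toFun (ENNReal.ofReal t) = ∫⁻ s in Set.Ioc (0:ℝ) t, a (ENNReal.ofReal s)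

/-- The Young conjugate `B̃(t) = sup {s·t − B(s) : s ∈ [0,∞]}`. -/
def youngConj (A : YoungFunction) (t : ℝ≥0∞) : ℝ≥0∞ :=
  ⨆ s : ℝ≥0∞, s * t - A.toFun s

variable {R : Type*} [MeasurableSpace R]

/-- The distribution function `f₊(λ) = μ({x : |f(x)| > λ})`. -/
def distFn (μ : Measure R) (f : R → ℝ) (lam : ℝ≥0∞) : ℝ≥0∞ :=
  μ {x | lam < ENNReal.ofReal |f x|}

/-- The non-increasing rearrangement `f*(t) = inf {λ ≥ 0 : f₊(λ) ≤ t}`. -/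
def rearr (μ : Measure R) (f : R → ℝ) (t : ℝ≥0∞) : ℝ≥0∞ :=
  sInf {lam : ℝ≥0∞ | distFn μ f lam ≤ t}

/-- The Lorentz functional `‖f‖_{p,q}` for `p, q ∈ (0,∞]`. -/
def lorentzNorm (μ : Measure R) (p q : ℝ≥0∞) (f : R → ℝ) : ℝ≥0∞ :=
  if q = ⊤ then
    ⨆ t : Set.Ioi (0:ℝ), ENNReal.ofReal t.1 ^ (p⁻¹).toReal * rearr μ f (ENNReal.ofReal t.1)
  else
    (∫⁻ t in Set.Ioi (0:ℝ),
        (ENNReal.ofReal t ^ (p⁻¹).toReal * rearr μ f (ENNReal.ofReal t)) ^ q.toReal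
          / ENNReal.ofReal t) ^ (q⁻¹).toReal

/-- The Luxemburg norm `‖f‖_A = inf {λ > 0 : ∫ A(|f|/λ) dμ ≤ 1}`. -/
def luxNorm (μ : Measure R) (A : YoungFunction) (f : R → ℝ) : ℝ≥0∞ :=
  sInf {lam : ℝ≥0∞ | 0 < lam ∧ ∫⁻ x, A.toFun (ENNReal.ofReal |f x| / lam) ∂μ ≤ 1}

/-- The measure `μ` is non-atomic: every set of positive measure has a subset
of strictly smaller positive measure. -/
def NonAtomic (μ : Measure R) : Prop :=
  ∀ s : Set R, MeasurableSet s → 0 < μ s →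
    ∃ t, t ⊆ s ∧ MeasurableSet t ∧ 0 < μ t ∧ μ t < μ s

/-- The almost-compact embedding `X ↪* Y`, for (quasi)norm functionals `NX`, `NY`:
`X ⊂ Y` and for every sequence of measurable sets `Eₙ` whose characteristic
functions tend to `0` a.e., `sup_{‖f‖_X ≤ 1} ‖f χ_{Eₙ}‖_Y → 0`. -/
def AlmostCompactEmbedding (μ : Measure R) (NX NY : (R → ℝ) → ℝ≥0∞) : Prop :=
  (∀ f : R → ℝ, Measurable f → NX f < ⊤ → NY f < ⊤) ∧
    ∀ E : ℕ → Set R, (∀ n, MeasurableSet (E n)) →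
      (∀ᵐ x ∂μ, Filter.Tendsto (fun n => (E n).indicator (fun _ => (1:ℝ)) x)
        Filter.atTop (nhds 0)) →
      Filter.Tendsto
        (fun n => ⨆ f : {f : R → ℝ // Measurable f ∧ NX f ≤ 1},
          NY ((E n).indicator f.1)) Filter.atTop (nhds 0)

/-- The continuous embedding `X ↪ Y`: there is `C > 0` with `‖f‖_Y ≤ C ‖f‖_X`. -/
def NormEmbedding (μ : Measure R) (NX NY : (R → ℝ) → ℝ≥0∞) : Prop :=
  ∃ C : ℝ, 0 < C ∧ ∀ f : R → ℝ, Measurable f → NY f ≤ ENNReal.ofReal C * NX f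

section Aux

/-- Key inequality: `B̃(B(t)/t) ≤ B(t)` for `0 < t < ∞`. -/
private lemma conj_self_bound (B : YoungFunction) (t : ℝ≥0∞) (ht0 : t ≠ 0) (httop : t ≠ ⊤) :
    youngConj B (B.toFun t / t) ≤ B.toFun t := by
  by_cases hBt : B.toFun t = ⊤
  · exact hBt ▸ le_top
  refine iSup_le fun u => ?_
  rcases le_or_gt u t with hu | hu
  · refine le_trans tsub_le_self ?_
    calc u * (B.toFun t / t) ≤ t * (B.toFun t / t) := by gcongr
      _ = B.toFun t := ENNReal.mul_div_cancel ht0 httop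
  · rcases eq_or_ne u ⊤ with rfl | hutop
    · simp [B.map_top, ENNReal.sub_top]
    by_cases hBu : B.toFun u = ⊤
    · simp [hBu, ENNReal.sub_top]
    have hu0 : u ≠ 0 := by
      rintro rfl
      exact ht0 (le_antisymm (le_of_lt hu) zero_le) |>.elim
    -- convexity: B t ≤ (t/u) * B u
    have hc : t / u ≤ 1 := by
      rw [ENNReal.div_le_iff hu0 hutop, one_mul]; exact hu.le
    have hcu : t / u * u = t := ENNReal.div_mul_cancel hu0 hutop
    have hconv := B.convex' u 0 (t / u) hc
    rw [mul_zero, add_zero, hcu, B.map_zero, mul_zero, add_zero] at hconv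
    -- hence B t / t ≤ B u / u
    have h2 : B.toFun t / t ≤ B.toFun u / u := by
      have key : t / u * B.toFun u / t = B.toFun u / u := by
        have h9 : t / u / t = u⁻¹ := by
          rw [div_eq_mul_inv, div_eq_mul_inv, mul_right_comm,
            ENNReal.mul_inv_cancel ht0 httop, one_mul]
        rw [mul_comm, mul_div_assoc, h9, ← div_eq_mul_inv]
      calc B.toFun t / t ≤ t / u * B.toFun u / t := ENNReal.div_le_div_right hconv _
        _ = B.toFun u / u := key
    calc u * (B.toFun t / t) - B.toFun u
        ≤ u * (B.toFun u / u) - B.toFun u :=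
          tsub_le_tsub_right (mul_le_mul_right h2 u) _
      _ = B.toFun u - B.toFun u := by rw [ENNReal.mul_div_cancel hu0 hutop]
      _ = 0 := tsub_self _
      _ ≤ B.toFun t := zero_le

private lemma dir_mpr (B : YoungFunction) (p : ℝ) (hp : 1 < p)
    (h : Filter.Tendsto (fun t : ℝ => ENNReal.ofReal t ^ p / B.toFun (ENNReal.ofReal t))
      Filter.atTop (nhds ⊤)) :
    Filter.Tendsto
      (fun t : ℝ => youngConj B (ENNReal.ofReal t) / ENNReal.ofReal t ^ (p / (p - 1)))
      Filter.atTop (nhds ⊤) := by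
  have hp1 : (0:ℝ) < p - 1 := by linarith
  rw [ENNReal.tendsto_nhds_top_iff_nnreal] at h ⊢
  intro K
  set c : ℝ := 2 * ((K : ℝ) + 1) with hc
  have hc0 : (0:ℝ) < c := by positivity
  set ε : ℝ := c ^ (-(p - 1)) / 2 with hε
  have hε0 : 0 < ε := by positivity
  obtain ⟨T, hT⟩ := Filter.eventually_atTop.mp (h (1 / ε).toNNReal)
  rw [Filter.eventually_atTop]
  refine ⟨max 1 ((max T 1) ^ (p - 1)), fun s hs => ?_⟩
  have hs1 : (1:ℝ) ≤ s := le_trans (le_max_left _ _) hs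
  have hs0 : (0:ℝ) < s := lt_of_lt_of_le one_pos hs1
  set u : ℝ := c * s ^ (1 / (p - 1)) with hu
  have hu0 : (0:ℝ) < u := by positivity
  -- u ≥ T
  have huT : T ≤ u := by
    have h1 : (max T 1) ^ (p - 1) ≤ s := le_trans (le_max_right _ _) hs
    have h2 : max T 1 ≤ s ^ (1 / (p - 1)) := by
      have := Real.rpow_le_rpow (by positivity) h1 (by positivity : (0:ℝ) ≤ 1 / (p - 1))
      rwa [← Real.rpow_mul (le_max_of_le_right zero_le_one),
        mul_one_div, div_self hp1.ne', Real.rpow_one] at this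
    calc T ≤ max T 1 := le_max_left _ _
      _ ≤ s ^ (1 / (p - 1)) := h2
      _ ≤ u := by
        have hc1 : (1:ℝ) ≤ c := by rw [hc]; nlinarith [K.coe_nonneg]
        rw [hu]
        nlinarith [Real.rpow_pos_of_pos hs0 (1 / (p - 1)), hc1]
  -- from hypothesis: B(u) ≤ ε * u^p
  have hBu : B.toFun (ENNReal.ofReal u) ≤ ENNReal.ofReal ε * ENNReal.ofReal u ^ p := by
    have h1 := hT u huT
    rw [show ((1 / ε).toNNReal : ℝ≥0∞) = ENNReal.ofReal (1 / ε) from rfl] at h1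
    have h2 : ENNReal.ofReal (1 / ε) * B.toFun (ENNReal.ofReal u) ≤ ENNReal.ofReal u ^ p := by
      refine (ENNReal.le_div_iff_mul_le (Or.inr ?_) (Or.inr ?_)).mp h1.le
      · exact (ENNReal.rpow_pos (ENNReal.ofReal_pos.mpr hu0) ENNReal.ofReal_ne_top).ne'
      · exact ENNReal.rpow_ne_top_of_nonneg (by linarith) ENNReal.ofReal_ne_top
    calc B.toFun (ENNReal.ofReal u)
        = ENNReal.ofReal ε * (ENNReal.ofReal (1 / ε) * B.toFun (ENNReal.ofReal u)) := by
          rw [← mul_assoc, ← ENNReal.ofReal_mul hε0.le,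
            mul_one_div, div_self hε0.ne', ENNReal.ofReal_one, one_mul]
      _ ≤ ENNReal.ofReal ε * ENNReal.ofReal u ^ p := mul_le_mul_right h2 _
  -- real computation: u * s - ε * u ^ p = ((K:ℝ) + 1) * s ^ (p / (p - 1))
  have hup : u ^ p = c ^ p * s ^ (p / (p - 1)) := by
    rw [hu, Real.mul_rpow hc0.le (by positivity), ← Real.rpow_mul hs0.le,
      one_div, inv_mul_eq_div]
  have hcpow : ε * u ^ p = (c / 2) * s ^ (p / (p - 1)) := by
    have hcc : c ^ (-(p - 1)) * c ^ p = c := by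
      rw [← Real.rpow_add hc0, show -(p - 1) + p = 1 by ring, Real.rpow_one]
    rw [hup, hε, div_mul_eq_mul_div, ← mul_assoc, hcc]
    ring
  have hus : u * s = c * s ^ (p / (p - 1)) := by
    have hexp : s ^ (1 / (p - 1)) * s = s ^ (p / (p - 1)) := by
      nth_rewrite 2 [← Real.rpow_one s]
      rw [← Real.rpow_add hs0, show 1 / (p - 1) + 1 = p / (p - 1) by field_simp; ring]
    rw [hu, mul_assoc, hexp]
  have hreal : u * s - ε * u ^ p = ((K : ℝ) + 1) * s ^ (p / (p - 1)) := by
    rw [hus, hcpow, ← sub_mul, hc]; ring_nf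
  -- conclude
  have hconj : ENNReal.ofReal (((K : ℝ) + 1) * s ^ (p / (p - 1))) ≤
      youngConj B (ENNReal.ofReal s) := by
    rw [← hreal, ENNReal.ofReal_sub _ (by positivity), ENNReal.ofReal_mul hu0.le,
      ENNReal.ofReal_mul hε0.le, ← ENNReal.ofReal_rpow_of_pos hu0]
    refine le_trans (tsub_le_tsub_left hBu _) ?_
    exact le_iSup (fun v => v * ENNReal.ofReal s - B.toFun v) (ENNReal.ofReal u)
  have hsq0 : ENNReal.ofReal s ^ (p / (p - 1)) ≠ 0 :=
    (ENNReal.rpow_pos (ENNReal.ofReal_pos.mpr hs0) ENNReal.ofReal_ne_top).ne'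
  have hsqt : ENNReal.ofReal s ^ (p / (p - 1)) ≠ ⊤ :=
    ENNReal.rpow_ne_top_of_nonneg (by positivity) ENNReal.ofReal_ne_top
  have hK1 : ENNReal.ofReal ((K : ℝ) + 1) ≤
      youngConj B (ENNReal.ofReal s) / ENNReal.ofReal s ^ (p / (p - 1)) := by
    rw [ENNReal.le_div_iff_mul_le (Or.inl hsq0) (Or.inl hsqt)]
    calc ENNReal.ofReal ((K : ℝ) + 1) * ENNReal.ofReal s ^ (p / (p - 1))
        = ENNReal.ofReal (((K : ℝ) + 1) * s ^ (p / (p - 1))) := by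
          rw [ENNReal.ofReal_mul (by positivity), ENNReal.ofReal_rpow_of_pos hs0]
      _ ≤ youngConj B (ENNReal.ofReal s) := hconj
  refine lt_of_lt_of_le ?_ hK1
  rw [ENNReal.ofReal_add (by positivity) zero_le_one, ENNReal.ofReal_one,
    ENNReal.ofReal_coe_nnreal]
  exact ENNReal.lt_add_right ENNReal.coe_ne_top one_ne_zero

private lemma dir_mp (B : YoungFunction) (p : ℝ) (hp : 1 < p)
    (h : Filter.Tendsto
      (fun t : ℝ => youngConj B (ENNReal.ofReal t) / ENNReal.ofReal t ^ (p / (p - 1)))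
      Filter.atTop (nhds ⊤)) :
    Filter.Tendsto (fun t : ℝ => ENNReal.ofReal t ^ p / B.toFun (ENNReal.ofReal t))
      Filter.atTop (nhds ⊤) := by
  have hp1 : (0:ℝ) < p - 1 := by linarith
  have hq1 : (1:ℝ) < p / (p - 1) := by
    rw [lt_div_iff₀ hp1]; linarith
  -- Step 0 : B is finite at finite points
  have hfin : ∀ t : ℝ, B.toFun (ENNReal.ofReal t) ≠ ⊤ := by
    intro t₀ h₀
    set t₁ : ℝ := max t₀ 1 with ht₁
    have ht₁1 : (1:ℝ) ≤ t₁ := le_max_right _ _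
    have ht₁0 : (0:ℝ) < t₁ := lt_of_lt_of_le one_pos ht₁1
    have h₁ : B.toFun (ENNReal.ofReal t₁) = ⊤ :=
      top_le_iff.mp (h₀ ▸ B.mono (ENNReal.ofReal_le_ofReal (le_max_left _ _)))
    have hbound : ∀ s : ℝ≥0∞, youngConj B s ≤ ENNReal.ofReal t₁ * s := by
      intro s
      refine iSup_le fun u => ?_
      rcases le_or_gt u (ENNReal.ofReal t₁) with hu | hu
      · exact le_trans tsub_le_self (mul_le_mul_left hu _)
      · have : B.toFun u = ⊤ := top_le_iff.mp (h₁ ▸ B.mono hu.le)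
        simp [this, ENNReal.sub_top]
    rw [ENNReal.tendsto_nhds_top_iff_nnreal] at h
    obtain ⟨S, hS⟩ := Filter.eventually_atTop.mp (h t₁.toNNReal)
    set s : ℝ := max S 2 with hs
    have hs2 : (2:ℝ) ≤ s := le_max_right _ _
    have hs0 : (0:ℝ) < s := by linarith
    have h2 := hS s (le_max_left _ _)
    rw [show ((t₁.toNNReal : ℝ≥0∞)) = ENNReal.ofReal t₁ from rfl] at h2
    have h3 : youngConj B (ENNReal.ofReal s) / ENNReal.ofReal s ^ (p / (p - 1)) <
        ENNReal.ofReal t₁ := by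
      refine lt_of_le_of_lt
        (ENNReal.div_le_div_right (hbound (ENNReal.ofReal s)) _) ?_
      rw [ENNReal.div_lt_iff
        (Or.inl (ENNReal.rpow_pos (ENNReal.ofReal_pos.mpr hs0) ENNReal.ofReal_ne_top).ne')
        (Or.inl (ENNReal.rpow_ne_top_of_nonneg (by positivity) ENNReal.ofReal_ne_top)),
        ENNReal.ofReal_rpow_of_pos hs0, ← ENNReal.ofReal_mul ht₁0.le,
        ← ENNReal.ofReal_mul ht₁0.le]
      refine ENNReal.ofReal_lt_ofReal_iff
        (mul_pos ht₁0 (Real.rpow_pos_of_pos hs0 _)) |>.mpr ?_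
      have hsq : s < s ^ (p / (p - 1)) := by
        nth_rewrite 1 [← Real.rpow_one s]
        exact Real.rpow_lt_rpow_left_iff (by linarith) |>.mpr hq1
      nlinarith
    exact absurd (h2.trans h3) (lt_irrefl _)
  -- main argument
  rw [ENNReal.tendsto_nhds_top_iff_nnreal] at h ⊢
  intro C
  set Cr : ℝ := (C : ℝ) + 1 with hCr
  have hCr1 : (1:ℝ) ≤ Cr := le_add_of_nonneg_left C.coe_nonneg
  have hCr0 : (0:ℝ) < Cr := by linarith
  set M : ℝ := Cr ^ (1 / (p - 1)) with hM
  have hM0 : (0:ℝ) < M := Real.rpow_pos_of_pos hCr0 _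
  have hMp : M ^ (p - 1) = Cr := by
    rw [hM, ← Real.rpow_mul hCr0.le, one_div, inv_mul_cancel₀ hp1.ne', Real.rpow_one]
  obtain ⟨S, hS⟩ := Filter.eventually_atTop.mp (h M.toNNReal)
  set S' : ℝ := max S 1 with hS'
  have hS'1 : (1:ℝ) ≤ S' := le_max_right _ _
  rw [Filter.eventually_atTop]
  refine ⟨max 1 ((Cr * S') ^ (1 / (p - 1))), fun t ht => ?_⟩
  have ht1 : (1:ℝ) ≤ t := le_trans (le_max_left _ _) ht
  have ht0 : (0:ℝ) < t := lt_of_lt_of_le one_pos ht1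
  set X : ℝ≥0∞ := ENNReal.ofReal t with hX
  have hX0 : X ≠ 0 := (ENNReal.ofReal_pos.mpr ht0).ne'
  have hXt : X ≠ ⊤ := ENNReal.ofReal_ne_top
  have hBt : B.toFun X ≠ ⊤ := hfin t
  have hBX : X * (B.toFun X / X) = B.toFun X := ENNReal.mul_div_cancel hX0 hXt
  -- it suffices to show (C+1) * B(t) ≤ t^p
  suffices hsuff : ENNReal.ofReal Cr * B.toFun X ≤ X ^ p by
    have h1 : ENNReal.ofReal Cr ≤ X ^ p / B.toFun X :=
      (ENNReal.le_div_iff_mul_le (Or.inr (ENNReal.rpow_pos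
          (ENNReal.ofReal_pos.mpr ht0) hXt).ne') (Or.inl hBt)).mpr hsuff
    refine lt_of_lt_of_le ?_ h1
    rw [hCr, ENNReal.ofReal_add (by positivity) zero_le_one, ENNReal.ofReal_one,
      ENNReal.ofReal_coe_nnreal]
    exact ENNReal.lt_add_right ENNReal.coe_ne_top one_ne_zero
  set s : ℝ≥0∞ := B.toFun X / X with hsdef
  have hstop : s ≠ ⊤ := by
    rw [hsdef, ENNReal.div_eq_inv_mul]
    exact ENNReal.mul_ne_top (ENNReal.inv_ne_top.mpr hX0) hBt
  rcases lt_or_ge s (ENNReal.ofReal S') with hcase | hcase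
  · -- small slope case
    have hBle : B.toFun X ≤ ENNReal.ofReal (t * S') := by
      calc B.toFun X = X * s := hBX.symm
        _ ≤ X * ENNReal.ofReal S' := mul_le_mul_right hcase.le _
        _ = ENNReal.ofReal (t * S') := by rw [hX, ← ENNReal.ofReal_mul ht0.le]
    calc ENNReal.ofReal Cr * B.toFun X ≤ ENNReal.ofReal Cr * ENNReal.ofReal (t * S') :=
          mul_le_mul_right hBle _
      _ = ENNReal.ofReal (Cr * (t * S')) := by rw [← ENNReal.ofReal_mul hCr0.le]
      _ ≤ ENNReal.ofReal (t ^ p) := by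
          refine ENNReal.ofReal_le_ofReal ?_
          have htp : Cr * S' ≤ t ^ (p - 1) := by
            have h1 : (Cr * S') ^ (1 / (p - 1)) ≤ t := le_trans (le_max_right _ _) ht
            have h2 := Real.rpow_le_rpow (by positivity) h1 (le_of_lt hp1)
            rwa [← Real.rpow_mul (by positivity), one_div,
              inv_mul_cancel₀ hp1.ne', Real.rpow_one] at h2
          calc Cr * (t * S') = (Cr * S') * t := by ring
            _ ≤ t ^ (p - 1) * t := by nlinarith
            _ = t ^ p := by
                nth_rewrite 2 [← Real.rpow_one t]
                rw [← Real.rpow_add ht0, show p - 1 + 1 = p by ring]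
      _ = X ^ p := (ENNReal.ofReal_rpow_of_pos ht0).symm
  · -- large slope case
    have hs0 : s ≠ 0 := by
      intro h0
      rw [h0] at hcase
      exact (ENNReal.ofReal_pos.mpr (lt_of_lt_of_le one_pos hS'1)).ne'
        (le_antisymm hcase zero_le)
    set sr : ℝ := s.toReal with hsr
    have hsrs : ENNReal.ofReal sr = s := ENNReal.ofReal_toReal hstop
    have hsrS : S ≤ sr := by
      have h1 : ENNReal.ofReal S' ≤ ENNReal.ofReal sr := hsrs ▸ hcase
      have h2 : S' ≤ sr := by
        by_contra hcon
        push_neg at hcon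
        exact absurd (lt_of_le_of_lt h1 (ENNReal.ofReal_lt_ofReal_iff
          (lt_of_lt_of_le one_pos hS'1)|>.mpr hcon)) (lt_irrefl _)
      linarith [le_max_left S 1]
    have h1 := hS sr hsrS
    rw [show ((M.toNNReal : ℝ≥0∞)) = ENNReal.ofReal M from rfl, hsrs] at h1
    have hconj : youngConj B s ≤ B.toFun X := conj_self_bound B X hX0 hXt
    have h2 : ENNReal.ofReal M ≤ B.toFun X / s ^ (p / (p - 1)) :=
      le_trans h1.le (ENNReal.div_le_div_right hconj _)
    have hsq0 : s ^ (p / (p - 1)) ≠ 0 := by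
      simp [ENNReal.rpow_eq_zero_iff, hs0, hstop]
    have hsqt : s ^ (p / (p - 1)) ≠ ⊤ :=
      ENNReal.rpow_ne_top_of_nonneg (by positivity) hstop
    have h3 : ENNReal.ofReal M * s ^ (p / (p - 1)) ≤ B.toFun X :=
      (ENNReal.le_div_iff_mul_le (Or.inl hsq0) (Or.inl hsqt)).mp h2
    -- split s^q = s * s^(1/(p-1)) and cancel s
    have hsplit : s ^ (p / (p - 1)) = s * s ^ (1 / (p - 1)) := by
      rw [show p / (p - 1) = 1 + 1 / (p - 1) by field_simp; ring,
        ENNReal.rpow_add _ _ hs0 hstop, ENNReal.rpow_one]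
    have h4 : s * (ENNReal.ofReal M * s ^ (1 / (p - 1))) ≤ s * X := by
      calc s * (ENNReal.ofReal M * s ^ (1 / (p - 1)))
          = ENNReal.ofReal M * s ^ (p / (p - 1)) := by rw [hsplit]; ring
        _ ≤ B.toFun X := h3
        _ = s * X := by rw [← hBX]; ring
    have h5 : ENNReal.ofReal M * s ^ (1 / (p - 1)) ≤ X :=
      (ENNReal.mul_le_mul_iff_right hs0 hstop).mp h4
    have h6 : ENNReal.ofReal Cr * s ≤ X ^ (p - 1) := by
      have h7 := ENNReal.rpow_le_rpow h5 (le_of_lt hp1)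
      rwa [ENNReal.mul_rpow_of_nonneg _ _ hp1.le, ← ENNReal.rpow_mul,
        one_div, inv_mul_cancel₀ hp1.ne', ENNReal.rpow_one,
        ENNReal.ofReal_rpow_of_pos hM0, hMp] at h7
    calc ENNReal.ofReal Cr * B.toFun X = ENNReal.ofReal Cr * s * X := by rw [← hBX]; ring
      _ ≤ X ^ (p - 1) * X := mul_le_mul_left h6 _
      _ = X ^ p := by
          nth_rewrite 2 [← ENNReal.rpow_one X]
          rw [← ENNReal.rpow_add _ _ hX0 hXt, show p - 1 + 1 = p by ring]

end Aux

/-- For a Young function `B` with Young conjugate `B̃` and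
`p ∈ (1,∞)` with conjugate exponent `p' = p/(p-1)`:
`lim_{t→∞} B̃(t)/t^{p'} = ∞` iff `lim_{t→∞} t^p/B(t) = ∞`. -/
theorem conjugate_limit_iff
    (B : YoungFunction) (p : ℝ) (hp : 1 < p) :
    Filter.Tendsto
        (fun t : ℝ => youngConj B (ENNReal.ofReal t) / ENNReal.ofReal t ^ (p / (p - 1)))
        Filter.atTop (nhds ⊤) ↔
      Filter.Tendsto (fun t : ℝ => ENNReal.ofReal t ^ p / B.toFun (ENNReal.ofReal t))
        Filter.atTop (nhds ⊤) := by
  exact ⟨dir_mp B p hp, dir_mpr B p hp⟩
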